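/- Let p be a positive integer and let R be a Noetherian local domain with residue field K and field of fractions L. Let M be a free R-module of finite rank equipped with an R-linear endomorphism θ satisfying θ^p = 0, and let θ_K and θ_L denote the induced endomorphisms of M_K = K ⊗_R M and M_L = L ⊗_R M. Then for every i with 1 ≤ i < p, the rank of (θ_K)^i is at most the rank of (θ_L)^i; consequently the Jordan type of the K[X]/(X^p)-module M_K is less than or equal to the Jordan type of the L[X]/(X^p)-module M_L in the dominance order. -/

import Mathlib

open Polynomial TensorProduct

/-- `K[X]/(X^i)`: the quotient of the polynomial ring `K[X]` by the ideal
generated by `X^i`, regarded as a `K`-module (indeed a `K`-algebra). -/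
def PolyQuot (K : Type*) [Field K] (i : ℕ) : Type _ :=
  Polynomial K ⧸ Ideal.span {(Polynomial.X : Polynomial K) ^ i}

noncomputable instance (K : Type*) [Field K] (i : ℕ) : CommRing (PolyQuot K i) :=
  inferInstanceAs (CommRing (Polynomial K ⧸ Ideal.span {(Polynomial.X : Polynomial K) ^ i}))

noncomputable instance (K : Type*) [Field K] (i : ℕ) : Algebra K (PolyQuot K i) :=
  inferInstanceAs (Algebra K (Polynomial K ⧸ Ideal.span {(Polynomial.X : Polynomial K) ^ i}))

/-- Multiplication by (the class of) `X` on `K[X]/(X^i)`, as a `K`-linear endomorphism. -/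
noncomputable def PolyQuot.mulX (K : Type*) [Field K] (i : ℕ) : Module.End K (PolyQuot K i) :=
  LinearMap.mulLeft K
    ((Ideal.Quotient.mk (Ideal.span {(Polynomial.X : Polynomial K) ^ i}) Polynomial.X :
      PolyQuot K i))

/-- The standard `K[X]/(X^p)`-module `⊕_{i=1}^{p} (K[X]/(X^i))^{⊕ a i}`. -/
abbrev StdJordanModule (K : Type*) [Field K] (p : ℕ) (a : ℕ → ℕ) : Type _ :=
  Π₀ i : Fin p, (Fin (a (i.1 + 1)) → PolyQuot K (i.1 + 1))

/-- The action of `X` on `⊕_{i=1}^{p} (K[X]/(X^i))^{⊕ a i}`. -/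
noncomputable def stdX (K : Type*) [Field K] (p : ℕ) (a : ℕ → ℕ) :
    Module.End K (StdJordanModule K p a) :=
  DFinsupp.mapRange.linearMap fun i : Fin p =>
    (PolyQuot.mulX K (i.1 + 1)).compLeft (Fin (a (i.1 + 1)))

/-- A `K`-vector space `V` with endomorphism `θ` (with `θ^p = 0`, so that `V` is a
`K[X]/(X^p)`-module with `X` acting as `θ`) has Jordan type `(a_1, ..., a_p)` if it is
isomorphic, as a `K[X]/(X^p)`-module, to `⊕_{i=1}^{p} (K[X]/(X^i))^{⊕ a i}`. -/
def HasJordanType (K : Type*) [Field K] (p : ℕ) {V : Type*} [AddCommGroup V] [Module K V]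
    (θ : Module.End K V) (a : ℕ → ℕ) : Prop :=
  ∃ e : V ≃ₗ[K] StdJordanModule K p a, ∀ v : V, e (θ v) = stdX K p a (e v)

/-- The dominance order on Jordan types (multiplicity vectors of partitions): for every
`ℓ`, the number of boxes in the top `ℓ` rows of the Young diagram of `a` is at most the
corresponding number for `b`. -/
def JordanTypeLE (p : ℕ) (a b : ℕ → ℕ) : Prop :=
  ∀ ℓ : ℕ, 1 ≤ ℓ →
    ∑ j ∈ Finset.Icc 1 p, min ℓ (∑ i ∈ Finset.Icc j p, a i)
      ≤ ∑ j ∈ Finset.Icc 1 p, min ℓ (∑ i ∈ Finset.Icc j p, b i)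


section Aux

open Finset



/-- Swap of summation: `∑_{j=i+1}^p ∑_{k=j}^p a k = ∑_{j=1}^p a j * (j - i)`. -/
lemma sum_tail_eq (a : ℕ → ℕ) : ∀ (p i : ℕ),
    ∑ j ∈ Icc (i+1) p, ∑ k ∈ Icc j p, a k = ∑ j ∈ Icc 1 p, a j * (j - i)
  | 0, i => by simp
  | (p+1), i => by
    have h1 : ∀ j ∈ Icc (i+1) (p+1), ∑ k ∈ Icc j (p+1), a k
        = (∑ k ∈ Icc j p, a k) + a (p+1) := by
      intro j hj
      rw [← Finset.insert_Icc_right_eq_Icc_add_one (mem_Icc.mp hj).2, Finset.sum_insert (by simp)]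
      ring
    rw [Finset.sum_congr rfl h1, Finset.sum_add_distrib, Finset.sum_const]
    simp only [Nat.card_Icc, smul_eq_mul]
    rw [← Finset.insert_Icc_right_eq_Icc_add_one (show 1 ≤ p + 1 by omega), Finset.sum_insert (by simp)]
    rcases le_or_gt (i+1) (p+1) with h | h
    · rw [← Finset.insert_Icc_right_eq_Icc_add_one (show i+1 ≤ p+1 by omega), Finset.sum_insert (by simp),
        sum_tail_eq a p i]
      have hE : Icc (p+1) p = (∅ : Finset ℕ) := Finset.Icc_eq_empty (by omega)
      rw [hE]
      simp only [Finset.sum_empty, zero_add]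
      have hc : p + 1 + 1 - (i+1) = (p + 1 - i) := by omega
      rw [hc, show (p+1-i) * a (p+1) = a (p+1) * (p+1-i) from Nat.mul_comm _ _]
      omega
    · have he : Icc (i+1) (p+1) = (∅ : Finset ℕ) := Finset.Icc_eq_empty (by omega)
      rw [he]
      have h2 : ∑ x ∈ Icc 1 p, a x * (x - i) = 0 :=
        Finset.sum_eq_zero fun x hx => by
          have hx2 := (mem_Icc.mp hx).2
          have : x - i = 0 := by omega
          simp [this]
      simp only [Finset.sum_empty, zero_add]
      rw [h2]
      have : p + 1 - i = 0 := by omega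
      simp [this]

lemma Ioc_eq_Icc_succ (i p : ℕ) : Ioc i p = Icc (i+1) p := by
  ext x; simp only [mem_Ioc, mem_Icc]; omega

/-- Upper bound: `∑_{j=1}^p min ℓ (A j) ≤ ℓ i + ∑_{j=i+1}^p A j` for `i ≤ p`. -/
lemma sum_min_le (A : ℕ → ℕ) (ℓ p i : ℕ) (hip : i ≤ p) :
    ∑ j ∈ Icc 1 p, min ℓ (A j) ≤ ℓ * i + ∑ j ∈ Icc (i+1) p, A j := by
  have hsplit : ∑ j ∈ Ioc 0 i, min ℓ (A j) + ∑ j ∈ Ioc i p, min ℓ (A j)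
      = ∑ j ∈ Ioc 0 p, min ℓ (A j) :=
    Finset.sum_Ioc_consecutive _ (by omega) hip
  rw [show Icc 1 p = Ioc 0 p from (Ioc_eq_Icc_succ 0 p).symm, ← hsplit]
  have h1 : ∑ j ∈ Ioc 0 i, min ℓ (A j) ≤ ℓ * i := by
    calc ∑ j ∈ Ioc 0 i, min ℓ (A j) ≤ ∑ _j ∈ Ioc 0 i, ℓ :=
          Finset.sum_le_sum fun j _ => min_le_left _ _
      _ = ℓ * i := by simp [Nat.card_Ioc, Nat.mul_comm]
  have h2 : ∑ j ∈ Ioc i p, min ℓ (A j) ≤ ∑ j ∈ Icc (i+1) p, A j := by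
    rw [Ioc_eq_Icc_succ]
    exact Finset.sum_le_sum fun j _ => min_le_right _ _
  omega

/-- A downward-closed subset of `Icc 1 p` is an initial segment. -/
lemma downward_closed_eq_Icc : ∀ (p : ℕ) (F : Finset ℕ), F ⊆ Icc 1 p →
    (∀ j ∈ F, ∀ k, 1 ≤ k → k ≤ j → k ∈ F) → F = Icc 1 F.card
  | 0, F, hF, _ => by
    have : F = ∅ := Finset.subset_empty.mp (by simpa using hF)
    simp [this]
  | (p+1), F, hF, hd => by
    by_cases hp : p + 1 ∈ F
    · have : F = Icc 1 (p+1) := by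
        apply Finset.Subset.antisymm hF
        intro k hk
        exact hd _ hp k (mem_Icc.mp hk).1 (mem_Icc.mp hk).2
      rw [this]; congr 1; simp [Nat.card_Icc]
    · have hF' : F ⊆ Icc 1 p := by
        intro x hx
        have h1 := mem_Icc.mp (hF hx)
        have : x ≠ p + 1 := fun h => hp (h ▸ hx)
        exact mem_Icc.mpr ⟨h1.1, by omega⟩
      exact downward_closed_eq_Icc p F hF' hd

/-- Exact evaluation of `∑ min` for an antitone sequence. -/
lemma sum_min_eq (B : ℕ → ℕ) (hB : ∀ j k, j ≤ k → B k ≤ B j) (ℓ p : ℕ) :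
    ∃ t ≤ p, ∑ j ∈ Icc 1 p, min ℓ (B j) = ℓ * t + ∑ j ∈ Icc (t+1) p, B j := by
  classical
  set F : Finset ℕ := (Icc 1 p).filter (fun j => ℓ ≤ B j) with hFdef
  set t : ℕ := F.card with ht
  have hFsub : F ⊆ Icc 1 p := Finset.filter_subset _ _
  have hFeq : F = Icc 1 t := by
    apply downward_closed_eq_Icc p F hFsub
    intro j hj k hk1 hkj
    rw [hFdef, Finset.mem_filter] at hj ⊢
    refine ⟨mem_Icc.mpr ⟨hk1, le_trans hkj (mem_Icc.mp hj.1).2⟩, le_trans hj.2 (hB k j hkj)⟩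
  refine ⟨t, le_trans (Finset.card_le_card hFsub) (by simp [Nat.card_Icc]), ?_⟩
  rw [← Finset.sum_filter_add_sum_filter_not (Icc 1 p) (fun j => ℓ ≤ B j)]
  have h1 : ∑ j ∈ F, min ℓ (B j) = ℓ * t := by
    rw [Finset.sum_congr rfl (fun j hj => min_eq_left ((Finset.mem_filter.mp hj).2))]
    simp [ht, Nat.mul_comm, hFdef]
  have h2 : (Icc 1 p).filter (fun j => ¬ ℓ ≤ B j) = Icc (t+1) p := by
    rw [Finset.filter_not, ← hFdef, hFeq]
    ext x
    simp only [Finset.mem_sdiff, mem_Icc]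
    omega
  rw [h2]
  have h3 : ∀ j ∈ Icc (t+1) p, min ℓ (B j) = B j := by
    intro j hj
    have : j ∉ F := by rw [hFeq]; intro h; exact absurd (mem_Icc.mp h).2 (by have := (mem_Icc.mp hj).1; omega)
    have hj' : j ∈ Icc 1 p := mem_Icc.mpr ⟨by have := (mem_Icc.mp hj).1; omega, (mem_Icc.mp hj).2⟩
    have : ¬ ℓ ≤ B j := fun h => this (Finset.mem_filter.mpr ⟨hj', h⟩)
    exact min_eq_right (le_of_not_ge this)
  rw [Finset.sum_congr rfl h3, h1]


end Aux

section MatrixAux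

open Matrix



section MatrixRank

variable {F : Type*} [Field F]

lemma rank_submatrix_le_cols {m n n' : Type*} [Fintype m] [Fintype n] [Fintype n']
    (A : Matrix m n F) (g : n' → n) : (A.submatrix id g).rank ≤ A.rank := by
  rw [rank_eq_finrank_span_cols, rank_eq_finrank_span_cols]
  apply Submodule.finrank_mono
  apply Submodule.span_mono
  rintro _ ⟨j, rfl⟩
  exact ⟨g j, rfl⟩

lemma rank_submatrix_le_general {m n m' n' : Type*} [Fintype m] [Fintype n] [Fintype m']
    [Fintype n'] (A : Matrix m n F) (f : m' → m) (g : n' → n) :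
    (A.submatrix f g).rank ≤ A.rank := by
  have h1 : (A.submatrix f g) = (A.submatrix id g).submatrix f id := rfl
  have h2 : ((A.submatrix id g).submatrix f id)ᵀ = (A.submatrix id g)ᵀ.submatrix id f := rfl
  calc (A.submatrix f g).rank = ((A.submatrix id g)ᵀ.submatrix id f).rank := by
        rw [h1, ← rank_transpose, h2]
    _ ≤ (A.submatrix id g)ᵀ.rank := rank_submatrix_le_cols _ f
    _ = (A.submatrix id g).rank := rank_transpose _
    _ ≤ A.rank := rank_submatrix_le_cols A g

lemma exists_linearIndependent_cols {m n : Type*} [Fintype m] [Fintype n]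
    (A : Matrix m n F) (r : ℕ) (hr : A.rank = r) :
    ∃ g : Fin r → n, LinearIndependent F (fun k => Aᵀ (g k)) := by
  classical
  obtain ⟨t, hts, hsp, hli⟩ := exists_linearIndependent F (Set.range Aᵀ)
  have hfin : t.Finite := Set.Finite.subset (Set.finite_range Aᵀ) hts
  haveI : Fintype t := hfin.fintype
  have hcard : Fintype.card t = r := by
    have h1 : Module.finrank F (Submodule.span F t) = t.toFinset.card :=
      finrank_span_set_eq_card (by exact hli)
    have h2 : A.rank = Module.finrank F (Submodule.span F t) := by
      rw [rank_eq_finrank_span_cols, show Set.range A.col = Set.range Aᵀ from rfl, ← hsp]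
    rw [h2, h1, Set.toFinset_card] at hr
    exact hr
  have hchoice : ∀ v : t, ∃ j : n, Aᵀ j = (v : m → F) := fun v => hts v.2
  choose jf hjf using hchoice
  obtain e : Fin r ≃ t := (Fintype.equivFinOfCardEq hcard).symm
  refine ⟨fun k => jf (e k), ?_⟩
  have : (fun k : Fin r => Aᵀ (jf (e k))) = fun k : Fin r => ((e k : t) : m → F) := by
    funext k; rw [hjf]
  rw [this]
  exact hli.comp e e.injective

lemma exists_submatrix_det_ne_zero {m n : Type*} [Fintype m] [Fintype n] [DecidableEq m]
    (A : Matrix m n F) (r : ℕ) (hr : A.rank = r) :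
    ∃ (f : Fin r → m) (g : Fin r → n), ((A.submatrix f g).det ≠ 0) := by
  obtain ⟨g, hg⟩ := exists_linearIndependent_cols A r hr
  set B := A.submatrix (id : m → m) g with hB
  have hBT : ∀ k, Bᵀ k = Aᵀ (g k) := fun k => rfl
  have hBTrank : Bᵀ.rank = r := by
    have : LinearIndependent F (fun k => Bᵀ k) := by
      simpa only [hBT] using hg
    rw [LinearIndependent.rank_matrix (M := Bᵀ) this, Fintype.card_fin]
  have hBrank : B.rank = r := by rw [← rank_transpose, hBTrank]
  obtain ⟨f, hf⟩ := exists_linearIndependent_cols Bᵀ r hBTrank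
  refine ⟨f, g, ?_⟩
  have hrows : LinearIndependent F (fun k => (A.submatrix f g) k) := by
    have : ∀ k, (A.submatrix f g) k = Bᵀᵀ (f k) := fun k => rfl
    simpa only [this, transpose_transpose] using hf
  have : IsUnit (A.submatrix f g) := (Matrix.linearIndependent_rows_iff_isUnit).mp hrows
  have hdet : IsUnit (A.submatrix f g).det := (Matrix.isUnit_iff_isUnit_det _).mp this
  exact hdet.ne_zero

/-- Rank semicontinuity: the rank of the image of `A` under any ring hom to a field is at
most the rank of the image of `A` under an injective ring hom to a field. -/
lemma rank_map_le_rank_map {R K L : Type*} [CommRing R] [Field K] [Field L]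
    {m n : Type*} [Fintype m] [Fintype n] [DecidableEq m]
    (A : Matrix m n R) (π : R →+* K) (σ : R →+* L) (hσ : Function.Injective σ) :
    (A.map π).rank ≤ (A.map σ).rank := by
  obtain ⟨f, g, hdet⟩ := exists_submatrix_det_ne_zero (A.map π) _ rfl
  have hπ : ((A.map π).submatrix f g).det = π ((A.submatrix f g).det) :=
    (RingHom.map_det π (A.submatrix f g)).symm
  have hσ' : ((A.map σ).submatrix f g).det = σ ((A.submatrix f g).det) :=
    (RingHom.map_det σ (A.submatrix f g)).symm
  have hdet0 : (A.submatrix f g).det ≠ 0 := by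
    intro h
    apply hdet
    rw [hπ, h, map_zero]
  have hdetσ : ((A.map σ).submatrix f g).det ≠ 0 := by
    rw [hσ']
    intro h
    exact hdet0 (hσ (by rw [h, map_zero]))
  have hrank : ((A.map σ).submatrix f g).rank = (A.map π).rank := by
    rw [Matrix.rank_of_isUnit _ ((Matrix.isUnit_iff_isUnit_det _).mpr
      (isUnit_iff_ne_zero.mpr hdetσ)), Fintype.card_fin]
  calc (A.map π).rank = ((A.map σ).submatrix f g).rank := hrank.symm
    _ ≤ (A.map σ).rank := rank_submatrix_le_general _ f g

end MatrixRank


end MatrixAux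

-- power basis on PolyQuot
noncomputable def PolyQuot.pb (K : Type*) [Field K] (j : ℕ) : PowerBasis K (PolyQuot K j) :=
  AdjoinRoot.powerBasis' (monic_X_pow j)

example (K : Type*) [Field K] (j : ℕ) :
    (PolyQuot.pb K j).gen
      = (Ideal.Quotient.mk (Ideal.span {(Polynomial.X : Polynomial K) ^ j}) Polynomial.X :
        PolyQuot K j) := rfl

lemma PolyQuot.pb_dim (K : Type*) [Field K] (j : ℕ) : (PolyQuot.pb K j).dim = j := by
  simp [PolyQuot.pb, AdjoinRoot.powerBasis']

lemma PolyQuot.gen_pow_eq_zero (K : Type*) [Field K] (j : ℕ) :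
    (PolyQuot.pb K j).gen ^ j = 0 := by
  show (AdjoinRoot.root ((Polynomial.X : Polynomial K) ^ j)) ^ j = 0
  rw [← AdjoinRoot.mk_self (f := (Polynomial.X : Polynomial K) ^ j), map_pow,
    AdjoinRoot.mk_X]

noncomputable instance (K : Type*) [Field K] (j : ℕ) : Module.Finite K (PolyQuot K j) :=
  Module.Finite.of_basis (PolyQuot.pb K j).basis

lemma PolyQuot.finrank_range_mulX_pow (K : Type*) [Field K] (j i : ℕ) :
    Module.finrank K (LinearMap.range ((PolyQuot.mulX K j) ^ i)) = j - i := by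
  classical
  set pb := PolyQuot.pb K j with hpb
  set x : PolyQuot K j := pb.gen with hx
  have hdim : pb.dim = j := PolyQuot.pb_dim K j
  have hxj : x ^ j = 0 := PolyQuot.gen_pow_eq_zero K j
  have hxhi : ∀ m : ℕ, j ≤ m → x ^ m = 0 := fun m hm => by
    calc x ^ m = x ^ j * x ^ (m - j) := by rw [← pow_add]; congr 1; omega
      _ = 0 := by rw [hxj, zero_mul]
  have hmul : PolyQuot.mulX K j = LinearMap.mulLeft K x := rfl
  have hpow : (PolyQuot.mulX K j) ^ i = LinearMap.mulLeft K (x ^ i) := by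
    rw [hmul, LinearMap.pow_mulLeft]
  rcases le_or_gt j i with h | h
  · have hji : j - i = 0 := by omega
    rw [hpow, hxhi i h, LinearMap.mulLeft_zero_eq_zero, LinearMap.range_zero, hji, finrank_bot]
  · -- i < j
    set g : Fin (j - i) → PolyQuot K j := fun k => x ^ (i + (k : ℕ)) with hg
    have hginj : LinearIndependent K g := by
      set h : Fin (j - i) → Fin pb.dim := fun k => ⟨i + (k : ℕ), by omega⟩ with hh
      have hinj : Function.Injective h := by
        intro k k' hkk'
        have : i + (k : ℕ) = i + (k' : ℕ) := congrArg Fin.val hkk'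
        exact Fin.ext (by omega)
      have : (fun k => pb.basis (h k)) = g := by
        funext k
        rw [pb.basis_eq_pow]
      rw [← this]
      exact pb.basis.linearIndependent.comp h hinj
    have hrange : LinearMap.range ((PolyQuot.mulX K j) ^ i)
        = Submodule.span K (Set.range g) := by
      apply le_antisymm
      · rw [LinearMap.range_eq_map, ← pb.basis.span_eq, Submodule.map_span, ← Set.range_comp]
        apply Submodule.span_le.mpr
        rintro _ ⟨k, rfl⟩
        show (((PolyQuot.mulX K j) ^ i) (pb.basis k)) ∈ _
        rw [hpow, pb.basis_eq_pow, LinearMap.mulLeft_apply, ← pow_add]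
        rcases lt_or_ge (i + (k : ℕ)) j with hlt | hle
        · exact Submodule.subset_span ⟨⟨(k : ℕ), by omega⟩, rfl⟩
        · rw [hxhi _ hle]
          exact Submodule.zero_mem _
      · apply Submodule.span_le.mpr
        rintro _ ⟨k, rfl⟩
        refine ⟨x ^ (k : ℕ), ?_⟩
        rw [hpow, LinearMap.mulLeft_apply, ← pow_add]
    rw [hrange, finrank_span_eq_card hginj, Fintype.card_fin]


section PiDiag

variable {K : Type*} [Field K] {ι : Type*} {V : ι → Type*}
  [∀ i, AddCommGroup (V i)] [∀ i, Module K (V i)]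

/-- The diagonal endomorphism of a product. -/
def piD (f : ∀ i, V i →ₗ[K] V i) : (∀ i, V i) →ₗ[K] (∀ i, V i) :=
  LinearMap.pi fun i => (f i).comp (LinearMap.proj i)

@[simp] lemma piD_apply (f : ∀ i, V i →ₗ[K] V i) (v : ∀ i, V i) (i : ι) :
    piD f v i = f i (v i) := rfl

lemma piD_pow (f : ∀ i, V i →ₗ[K] V i) (n : ℕ) :
    (piD f) ^ n = piD (fun i => (f i) ^ n) := by
  induction n with
  | zero => ext v i; simp [piD_apply]
  | succ n ih =>
    ext v i
    simp [pow_succ, Module.End.mul_apply, ih, piD_apply]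

lemma range_piD (f : ∀ i, V i →ₗ[K] V i) :
    LinearMap.range (piD f) = Submodule.pi Set.univ (fun i => LinearMap.range (f i)) := by
  ext v
  constructor
  · rintro ⟨w, rfl⟩ i _
    exact ⟨w i, rfl⟩
  · intro h
    have h' : ∀ i, ∃ w, f i w = v i := fun i => h i (Set.mem_univ i)
    choose w hw using h'
    exact ⟨w, funext hw⟩

/-- `Submodule.pi` is equivalent to the product of the submodules. -/
def Submodule.piEquivPi (p : ∀ i, Submodule K (V i)) :
    (Submodule.pi Set.univ p) ≃ₗ[K] ∀ i, (p i) where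
  toFun x := fun i => ⟨x.1 i, x.2 i (Set.mem_univ i)⟩
  invFun y := ⟨fun i => (y i).1, fun i _ => (y i).2⟩
  map_add' x y := rfl
  map_smul' c x := rfl
  left_inv x := rfl
  right_inv y := rfl

lemma finrank_pi_submodule [Fintype ι] [∀ i, FiniteDimensional K (V i)]
    (p : ∀ i, Submodule K (V i)) :
    Module.finrank K (Submodule.pi Set.univ p) = ∑ i, Module.finrank K (p i) := by
  rw [LinearEquiv.finrank_eq (Submodule.piEquivPi p), Module.finrank_pi_fintype]

lemma finrank_range_piD [Fintype ι] [∀ i, FiniteDimensional K (V i)]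
    (f : ∀ i, V i →ₗ[K] V i) :
    Module.finrank K (LinearMap.range (piD f)) = ∑ i, Module.finrank K (LinearMap.range (f i)) := by
  rw [range_piD, finrank_pi_submodule]

lemma compLeft_eq_piD {W : Type*} [AddCommGroup W] [Module K W] (g : W →ₗ[K] W) (α : Type*) :
    g.compLeft α = piD (fun _ : α => g) := by
  ext v i
  rfl

lemma compLeft_pow {W : Type*} [AddCommGroup W] [Module K W] (g : W →ₗ[K] W) (α : Type*) (n : ℕ) :
    (g.compLeft α) ^ n = (g ^ n).compLeft α := by
  rw [compLeft_eq_piD, piD_pow, compLeft_eq_piD]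

lemma finrank_range_compLeft {W : Type*} [AddCommGroup W] [Module K W] [FiniteDimensional K W]
    (g : W →ₗ[K] W) (α : Type*) [Fintype α] :
    Module.finrank K (LinearMap.range (g.compLeft α))
      = Fintype.card α * Module.finrank K (LinearMap.range g) := by
  rw [compLeft_eq_piD, finrank_range_piD, Finset.sum_const, Finset.card_univ, smul_eq_mul]

/-- Transport of `finrank (range (θ ^ n))` along an intertwining equivalence. -/
lemma finrank_range_pow_eq_of_intertwine {V W : Type*} [AddCommGroup V] [Module K V]
    [AddCommGroup W] [Module K W] (e : V ≃ₗ[K] W) (θ : Module.End K V) (φ : Module.End K W)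
    (h : ∀ v, e (θ v) = φ (e v)) (n : ℕ) :
    Module.finrank K (LinearMap.range (θ ^ n)) = Module.finrank K (LinearMap.range (φ ^ n)) := by
  have h' : ∀ v, e ((θ ^ n) v) = (φ ^ n) (e v) := by
    induction n with
    | zero => intro v; simp
    | succ n ih =>
      intro v
      rw [pow_succ, pow_succ]
      simp only [Module.End.mul_apply]
      rw [ih (θ v), h v]
  have hcomp : (φ ^ n).comp (e : V →ₗ[K] W) = (e : V →ₗ[K] W).comp (θ ^ n) :=
    LinearMap.ext fun v => (h' v).symm
  have h1 : LinearMap.range (φ ^ n) = LinearMap.range ((φ ^ n).comp (e : V →ₗ[K] W)) :=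
    (LinearMap.range_comp_of_range_eq_top _ e.range).symm
  rw [h1, hcomp, LinearMap.range_comp]
  exact (LinearEquiv.finrank_map_eq e _).symm

end PiDiag


noncomputable def stdEquivPi (K : Type*) [Field K] (p : ℕ) (a : ℕ → ℕ) :
    StdJordanModule K p a ≃ₗ[K] ∀ i : Fin p, (Fin (a (i.1 + 1)) → PolyQuot K (i.1 + 1)) :=
  { DFinsupp.equivFunOnFintype with
    map_add' := fun x y => funext fun i => by simp
    map_smul' := fun c x => funext fun i => by simp }

lemma finrank_range_stdX_pow (K : Type*) [Field K] (p : ℕ) (a : ℕ → ℕ) (n : ℕ) :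
    Module.finrank K (LinearMap.range ((stdX K p a) ^ n))
      = ∑ j ∈ Finset.Icc 1 p, a j * (j - n) := by
  classical
  set f : ∀ i : Fin p, (Fin (a (i.1 + 1)) → PolyQuot K (i.1 + 1)) →ₗ[K]
      (Fin (a (i.1 + 1)) → PolyQuot K (i.1 + 1)) :=
    fun i => (PolyQuot.mulX K (i.1 + 1)).compLeft (Fin (a (i.1 + 1))) with hf
  have hint : ∀ v, stdEquivPi K p a (stdX K p a v) = piD f (stdEquivPi K p a v) := by
    intro v
    funext i
    exact DFinsupp.mapRange_apply (fun i x => f i x) (fun i => (f i).map_zero) v i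
  rw [finrank_range_pow_eq_of_intertwine (stdEquivPi K p a) _ _ hint n, piD_pow,
    finrank_range_piD]
  have hcomp : ∀ i : Fin p, Module.finrank K (LinearMap.range ((f i) ^ n))
      = a (i.1 + 1) * ((i.1 + 1) - n) := by
    intro i
    rw [hf]
    simp only []
    rw [compLeft_pow, finrank_range_compLeft, PolyQuot.finrank_range_mulX_pow,
      Fintype.card_fin]
  rw [Finset.sum_congr rfl (fun i _ => hcomp i)]
  rw [Fin.sum_univ_eq_sum_range (fun i => a (i + 1) * ((i + 1) - n)) p]
  rw [show Finset.Icc 1 p = Finset.Ico 1 (p+1) from (Finset.Ico_add_one_right_eq_Icc 1 p).symm,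
    Finset.sum_Ico_eq_sum_range]
  simp only [Nat.add_sub_cancel]
  apply Finset.sum_congr rfl
  intro i _
  rw [Nat.add_comm 1 i]


/-- Let `R` be a Noetherian local domain with residue field `K` and fraction field `L`,
and let `M` be a finite free `R`-module with an `R`-linear endomorphism `θ` satisfying
`θ^p = 0`.  Then for every `1 ≤ i < p` the rank of `(θ_K)^i` is at most the rank of
`(θ_L)^i`; consequently, the Jordan type of `M_K` is at most that of `M_L` in the
dominance order. -/
theorem jordanType_specialization (p : ℕ) (hp : 0 < p)
    (R : Type*) [CommRing R] [IsNoetherianRing R] [IsLocalRing R] [IsDomain R]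
    (M : Type*) [AddCommGroup M] [Module R M] [Module.Free R M] [Module.Finite R M]
    (θ : Module.End R M) (hθ : θ ^ p = 0) :
    (∀ i : ℕ, 1 ≤ i → i < p →
        Module.finrank (IsLocalRing.ResidueField R)
            (LinearMap.range ((θ.baseChange (IsLocalRing.ResidueField R)) ^ i))
          ≤ Module.finrank (FractionRing R)
            (LinearMap.range ((θ.baseChange (FractionRing R)) ^ i)))
      ∧ (∀ a b : ℕ → ℕ,
          HasJordanType (IsLocalRing.ResidueField R) p
            (θ.baseChange (IsLocalRing.ResidueField R)) a →
          HasJordanType (FractionRing R) p (θ.baseChange (FractionRing R)) b →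
          JordanTypeLE p a b) := by
  classical
  set K := IsLocalRing.ResidueField R with hK
  set L := FractionRing R with hL
  let b : Module.Basis (Module.Free.ChooseBasisIndex R M) R M := Module.Free.chooseBasis R M
  have key : ∀ i : ℕ,
      Module.finrank K (LinearMap.range ((θ.baseChange K) ^ i))
        ≤ Module.finrank L (LinearMap.range ((θ.baseChange L) ^ i)) := by
    intro i
    rw [← LinearMap.baseChange_pow R K M θ i, ← LinearMap.baseChange_pow R L M θ i]
    have h2K : Matrix.toLin (Algebra.TensorProduct.basis K b) (Algebra.TensorProduct.basis K b)
        ((LinearMap.toMatrix b b (θ ^ i)).map (algebraMap R K)) = (θ ^ i).baseChange K := by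
      rw [← LinearMap.toMatrix_baseChange K (θ ^ i) b b, Matrix.toLin_toMatrix]
    have h2L : Matrix.toLin (Algebra.TensorProduct.basis L b) (Algebra.TensorProduct.basis L b)
        ((LinearMap.toMatrix b b (θ ^ i)).map (algebraMap R L)) = (θ ^ i).baseChange L := by
      rw [← LinearMap.toMatrix_baseChange L (θ ^ i) b b, Matrix.toLin_toMatrix]
    rw [← h2K, ← h2L, ← Matrix.rank_eq_finrank_range_toLin, ← Matrix.rank_eq_finrank_range_toLin]
    exact rank_map_le_rank_map _ (algebraMap R K) (algebraMap R L)
      (IsFractionRing.injective R L)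
  refine ⟨fun i _ _ => key i, ?_⟩
  rintro a c ⟨ea, hea⟩ ⟨eb, heb⟩ ℓ hℓ
  have hra : ∀ n, Module.finrank K (LinearMap.range ((θ.baseChange K) ^ n))
      = ∑ j ∈ Finset.Icc 1 p, a j * (j - n) := fun n => by
    rw [finrank_range_pow_eq_of_intertwine ea _ _ hea n, finrank_range_stdX_pow]
  have hrb : ∀ n, Module.finrank L (LinearMap.range ((θ.baseChange L) ^ n))
      = ∑ j ∈ Finset.Icc 1 p, c j * (j - n) := fun n => by
    rw [finrank_range_pow_eq_of_intertwine eb _ _ heb n, finrank_range_stdX_pow]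
  set B : ℕ → ℕ := fun j => ∑ k ∈ Finset.Icc j p, c k with hB
  have hBanti : ∀ j k, j ≤ k → B k ≤ B j := by
    intro j k hjk
    apply Finset.sum_le_sum_of_subset
    exact Finset.Icc_subset_Icc_left hjk
  obtain ⟨t, htp, hteq⟩ := sum_min_eq B hBanti ℓ p
  have hat : ∑ j ∈ Finset.Icc 1 p, a j * (j - t) ≤ ∑ j ∈ Finset.Icc 1 p, c j * (j - t) := by
    have h := key t
    rw [hra t, hrb t] at h
    exact h
  calc ∑ j ∈ Finset.Icc 1 p, min ℓ (∑ i ∈ Finset.Icc j p, a i)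
      ≤ ℓ * t + ∑ j ∈ Finset.Icc (t+1) p, ∑ k ∈ Finset.Icc j p, a k :=
        sum_min_le _ ℓ p t htp
    _ = ℓ * t + ∑ j ∈ Finset.Icc 1 p, a j * (j - t) := by rw [sum_tail_eq]
    _ ≤ ℓ * t + ∑ j ∈ Finset.Icc 1 p, c j * (j - t) := by omega
    _ = ℓ * t + ∑ j ∈ Finset.Icc (t+1) p, B j := by rw [← sum_tail_eq c p t]
    _ = ∑ j ∈ Finset.Icc 1 p, min ℓ (B j) := hteq.symm
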